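/- For the continuous-time mean dynamics ṁ = σ(Wm+β) − m with W strictly sub-diagonal block-triangular and σ Lipschitz acting blockwise, the block error e_ℓ(t) = m_ℓ(t) − m̄_ℓ satisfies ‖e_ℓ(t)‖ ≤ p_ℓ(t) e^{−t} for a polynomial p_ℓ of degree at most ℓ−1 depending on the initial condition and Lipschitz constants; hence m(t) → m̄ exponentially. -/

import Mathlib

open Filter Polynomial


noncomputable def antider (q : Polynomial ℝ) : Polynomial ℝ :=
  q.sum fun k a => Polynomial.C (a / (k + 1)) * Polynomial.X ^ (k + 1)

lemma antider_derivative (q : Polynomial ℝ) : (antider q).derivative = q := by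
  conv_rhs => rw [← q.sum_C_mul_X_pow_eq]
  rw [antider, Polynomial.sum, Polynomial.sum, map_sum]
  refine Finset.sum_congr rfl fun k _ => ?_
  rw [Polynomial.derivative_C_mul_X_pow]
  have : q.coeff k / ((k:ℝ) + 1) * ((k+1 : ℕ) : ℝ) = q.coeff k := by push_cast; field_simp
  rw [this]
  simp

lemma antider_natDegree (q : Polynomial ℝ) : (antider q).natDegree ≤ q.natDegree + 1 := by
  rw [antider, Polynomial.sum]
  refine Polynomial.natDegree_sum_le_of_forall_le _ _ fun k hk => ?_
  exact (Polynomial.natDegree_C_mul_X_pow_le _ _).trans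
    (Nat.succ_le_succ (Polynomial.le_natDegree_of_mem_supp k hk))

lemma antider_eval_zero (q : Polynomial ℝ) : (antider q).eval 0 = 0 := by
  rw [antider, Polynomial.sum, Polynomial.eval_finset_sum]
  refine Finset.sum_eq_zero fun k _ => ?_
  simp

lemma antider_hasDerivAt (q : Polynomial ℝ) (s : ℝ) :
    HasDerivAt (fun x => (antider q).eval x) (q.eval s) s := by
  have := (antider q).hasDerivAt s
  rwa [antider_derivative] at this

lemma antider_integral (q : Polynomial ℝ) (t : ℝ) :
    ∫ s in (0:ℝ)..t, q.eval s = (antider q).eval t := by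
  rw [intervalIntegral.integral_eq_sub_of_hasDerivAt (fun s _ => antider_hasDerivAt q s)
    (q.continuous_aeval.intervalIntegrable _ _), antider_eval_zero, sub_zero]

lemma antider_eval_nonneg (q : Polynomial ℝ) (h : ∀ s, 0 ≤ s → 0 ≤ q.eval s) :
    ∀ t, 0 ≤ t → 0 ≤ (antider q).eval t := by
  intro t ht
  rw [← antider_integral]
  exact intervalIntegral.integral_nonneg ht fun s hs => h s hs.1

lemma ode_bound (e d : ℝ → ℝ) (hd : ∀ t, HasDerivAt e (d t - e t) t)
    (hdc : Continuous d) (q : Polynomial ℝ)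
    (hq : ∀ s, 0 ≤ s → |d s| ≤ q.eval s * Real.exp (-s)) :
    ∀ t, 0 ≤ t → |e t| ≤ (|e 0| + (antider q).eval t) * Real.exp (-t) := by
  intro t ht
  set g : ℝ → ℝ := fun s => Real.exp s * e s with hgdef
  have hg' : ∀ s, HasDerivAt g (Real.exp s * d s) s := by
    intro s
    have h := (Real.hasDerivAt_exp s).mul (hd s)
    refine h.congr_deriv ?_
    ring
  have hftc : ∫ s in (0:ℝ)..t, Real.exp s * d s = g t - g 0 :=
    intervalIntegral.integral_eq_sub_of_hasDerivAt (fun s _ => hg' s)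
      ((Real.continuous_exp.mul hdc).intervalIntegrable _ _)
  have hbound : |g t - g 0| ≤ (antider q).eval t := by
    rw [← hftc, ← antider_integral]
    calc |∫ s in (0:ℝ)..t, Real.exp s * d s|
        ≤ ∫ s in (0:ℝ)..t, Real.exp s * |d s| := by
          simpa [Real.norm_eq_abs, abs_mul, abs_of_pos (Real.exp_pos _)] using
            intervalIntegral.norm_integral_le_integral_norm
              (f := fun s => Real.exp s * d s) (a := 0) (b := t) (μ := MeasureTheory.volume) ht
      _ ≤ ∫ s in (0:ℝ)..t, q.eval s := by
          refine intervalIntegral.integral_mono_on ht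
            ((Real.continuous_exp.mul hdc.abs).intervalIntegrable _ _)
            (q.continuous_aeval.intervalIntegrable _ _) fun s hs => ?_
          calc Real.exp s * |d s| ≤ Real.exp s * (q.eval s * Real.exp (-s)) := by
                exact mul_le_mul_of_nonneg_left (hq s hs.1) (Real.exp_pos s).le
            _ = q.eval s := by
                rw [mul_comm (q.eval s), ← mul_assoc, ← Real.exp_add]
                simp
  have hgt : |g t| ≤ |e 0| + (antider q).eval t := by
    have h0 : g 0 = e 0 := by simp [hgdef]
    rw [h0] at hbound
    calc |g t| = |e 0 + (g t - e 0)| := by ring_nf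
      _ ≤ |e 0| + |g t - e 0| := abs_add_le _ _
      _ ≤ |e 0| + (antider q).eval t := add_le_add_right hbound _
  have he : e t = g t * Real.exp (-t) := by
    rw [hgdef]
    simp only [Real.exp_neg]
    field_simp
  rw [he, abs_mul, abs_of_pos (Real.exp_pos (-t))]
  exact mul_le_mul_of_nonneg_right hgt (Real.exp_pos (-t)).le



/-- for the continuous-time mean dynamics `ṁ = σ(W m + β) - m`
with strictly sub-diagonal block-triangular `W` and blockwise Lipschitz `σ`,
the block error `e_ℓ(t) = m_ℓ(t) - m̄_ℓ` (blocks `0`-indexed) satisfies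
`‖e_ℓ(t)‖ ≤ p_ℓ(t) e^{-t}` for a polynomial `p_ℓ` of degree at most `ℓ`
(the paper's `ℓ - 1` in `1`-indexed form); hence `m(t) → m̄` exponentially. -/
theorem stmt18 {L : ℕ} {n : Fin L → ℕ}
    (W : Matrix ((ℓ : Fin L) × Fin (n ℓ)) ((ℓ : Fin L) × Fin (n ℓ)) ℝ)
    (hW : ∀ i j : (ℓ : Fin L) × Fin (n ℓ), (i.1 : ℕ) ≠ (j.1 : ℕ) + 1 → W i j = 0)
    (σ : Fin L → ℝ → ℝ) (K : Fin L → NNReal)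
    (hσ : ∀ ℓ, LipschitzWith (K ℓ) (σ ℓ))
    (β : ((ℓ : Fin L) × Fin (n ℓ)) → ℝ)
    (m : ℝ → ((ℓ : Fin L) × Fin (n ℓ)) → ℝ)
    (hm : ∀ t, HasDerivAt m (fun i => σ i.1 (W.mulVec (m t) i + β i) - m t i) t)
    (mbar : ((ℓ : Fin L) × Fin (n ℓ)) → ℝ)
    (hmbar : ∀ i, mbar i = σ i.1 (W.mulVec mbar i + β i)) :
    (∀ ℓ : Fin L, ∃ p : Polynomial ℝ, p.natDegree ≤ (ℓ : ℕ) ∧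
      ∀ t, 0 ≤ t →
        ‖(fun j : Fin (n ℓ) => m t ⟨ℓ, j⟩ - mbar ⟨ℓ, j⟩)‖ ≤ p.eval t * Real.exp (-t)) ∧
    Tendsto m atTop (nhds mbar) := by
  classical
  have hmc : ∀ i, Continuous fun t => m t i := by
    intro i
    exact continuous_iff_continuousAt.mpr fun t => ((hasDerivAt_pi.1 (hm t) i)).continuousAt
  have hmulc : ∀ i, Continuous fun t => W.mulVec (m t) i := by
    intro i
    have h : (fun t => W.mulVec (m t) i) = fun t => ∑ j, W i j * m t j := by
      funext t
      simp [Matrix.mulVec, dotProduct]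
    rw [h]
    exact continuous_finset_sum _ fun j _ => continuous_const.mul (hmc j)
  set d : ((ℓ : Fin L) × Fin (n ℓ)) → ℝ → ℝ :=
    fun i t => σ i.1 (W.mulVec (m t) i + β i) - σ i.1 (W.mulVec mbar i + β i) with hd
  have hdc : ∀ i, Continuous (d i) := fun i =>
    (((hσ i.1).continuous.comp ((hmulc i).add continuous_const)).sub continuous_const)
  have hde : ∀ i t, HasDerivAt (fun t => m t i - mbar i) (d i t - (m t i - mbar i)) t := by
    intro i t
    have h1 := (hasDerivAt_pi.1 (hm t) i).sub_const (mbar i)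
    refine h1.congr_deriv ?_
    simp only [hd]
    rw [← hmbar i]
    ring
  have block : ∀ (ℓ : Fin L) (q : Polynomial ℝ), (∀ s, 0 ≤ s → 0 ≤ q.eval s) →
      (∀ (j : Fin (n ℓ)) (s : ℝ), 0 ≤ s → |d ⟨ℓ, j⟩ s| ≤ q.eval s * Real.exp (-s)) →
      ∃ p : Polynomial ℝ, p.natDegree ≤ (antider q).natDegree ∧
        (∀ s, 0 ≤ s → 0 ≤ p.eval s) ∧
        ∀ t, 0 ≤ t → ∀ j : Fin (n ℓ), |m t ⟨ℓ, j⟩ - mbar ⟨ℓ, j⟩| ≤ p.eval t * Real.exp (-t) := by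
    intro ℓ q hq0 hq
    set A : ℝ := ∑ j : Fin (n ℓ), |m 0 ⟨ℓ, j⟩ - mbar ⟨ℓ, j⟩| with hA
    have hA0 : 0 ≤ A := Finset.sum_nonneg fun j _ => abs_nonneg _
    refine ⟨Polynomial.C A + antider q, ?_, ?_, ?_⟩
    · refine (Polynomial.natDegree_add_le _ _).trans ?_
      simp [Polynomial.natDegree_C]
    · intro s hs
      simp only [Polynomial.eval_add, Polynomial.eval_C]
      exact add_nonneg hA0 (antider_eval_nonneg q hq0 s hs)
    · intro t ht j
      have h := ode_bound (fun t => m t ⟨ℓ, j⟩ - mbar ⟨ℓ, j⟩) (d ⟨ℓ, j⟩) (hde _) (hdc _) q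
        (hq j) t ht
      refine h.trans ?_
      have hj : |m 0 ⟨ℓ, j⟩ - mbar ⟨ℓ, j⟩| ≤ A :=
        Finset.single_le_sum (f := fun i : Fin (n ℓ) => |m 0 ⟨ℓ, i⟩ - mbar ⟨ℓ, i⟩|)
          (fun i _ => abs_nonneg _) (Finset.mem_univ j)
      simp only [Polynomial.eval_add, Polynomial.eval_C]
      exact mul_le_mul_of_nonneg_right (add_le_add_left hj _) (Real.exp_pos _).le
  have key : ∀ k : ℕ, ∀ hk : k < L, ∃ p : Polynomial ℝ, p.natDegree ≤ k ∧
      (∀ s, 0 ≤ s → 0 ≤ p.eval s) ∧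
      ∀ t, 0 ≤ t → ∀ j : Fin (n ⟨k, hk⟩),
        |m t ⟨⟨k, hk⟩, j⟩ - mbar ⟨⟨k, hk⟩, j⟩| ≤ p.eval t * Real.exp (-t) := by
    intro k
    induction k with
    | zero =>
      intro hk
      have hdz : ∀ (j : Fin (n ⟨0, hk⟩)) (s : ℝ), 0 ≤ s →
          |d ⟨⟨0, hk⟩, j⟩ s| ≤ (0 : Polynomial ℝ).eval s * Real.exp (-s) := by
        intro j s hs
        have h1 : W.mulVec (m s) ⟨⟨0, hk⟩, j⟩ = 0 := by
          simp only [Matrix.mulVec, dotProduct]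
          exact Finset.sum_eq_zero fun j' _ => by simp only [hW ⟨⟨0, hk⟩, j⟩ j' (by simp), zero_mul]
        have h2 : W.mulVec mbar ⟨⟨0, hk⟩, j⟩ = 0 := by
          simp only [Matrix.mulVec, dotProduct]
          exact Finset.sum_eq_zero fun j' _ => by simp only [hW ⟨⟨0, hk⟩, j⟩ j' (by simp), zero_mul]
        simp [hd, h1, h2]
      obtain ⟨p, hp1, hp2, hp3⟩ := block ⟨0, hk⟩ 0 (by simp) hdz
      refine ⟨p, ?_, hp2, hp3⟩
      have hz0 : antider 0 = 0 := by simp [antider]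
      simpa [hz0] using hp1
    | succ k ih =>
      intro hk
      have hk' : k < L := Nat.lt_of_succ_lt hk
      obtain ⟨pk, hpk1, hpk2, hpk3⟩ := ih hk'
      set ℓ : Fin L := ⟨k + 1, hk⟩ with hℓ
      set c : ℝ := (K ℓ : ℝ) * ∑ i : Fin (n ℓ), ∑ j' : (ℓ' : Fin L) × Fin (n ℓ'), |W ⟨ℓ, i⟩ j'|
        with hc
      have hc0 : 0 ≤ c := mul_nonneg (K ℓ).coe_nonneg
        (Finset.sum_nonneg fun i _ => Finset.sum_nonneg fun j' _ => abs_nonneg _)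
      have hdriv : ∀ (j : Fin (n ℓ)) (s : ℝ), 0 ≤ s →
          |d ⟨ℓ, j⟩ s| ≤ (Polynomial.C c * pk).eval s * Real.exp (-s) := by
        intro j s hs
        have hpk0 : 0 ≤ pk.eval s * Real.exp (-s) :=
          mul_nonneg (hpk2 s hs) (Real.exp_pos _).le
        have hlip : |d ⟨ℓ, j⟩ s| ≤
            (K ℓ : ℝ) * |W.mulVec (m s) ⟨ℓ, j⟩ - W.mulVec mbar ⟨ℓ, j⟩| := by
          have h := (hσ ℓ).dist_le_mul (W.mulVec (m s) ⟨ℓ, j⟩ + β ⟨ℓ, j⟩)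
            (W.mulVec mbar ⟨ℓ, j⟩ + β ⟨ℓ, j⟩)
          rw [Real.dist_eq, Real.dist_eq, add_sub_add_right_eq_sub] at h
          simpa [hd] using h
        have hsum : |W.mulVec (m s) ⟨ℓ, j⟩ - W.mulVec mbar ⟨ℓ, j⟩| ≤
            (∑ j' : (ℓ' : Fin L) × Fin (n ℓ'), |W ⟨ℓ, j⟩ j'|) *
              (pk.eval s * Real.exp (-s)) := by
          have h1 : W.mulVec (m s) ⟨ℓ, j⟩ - W.mulVec mbar ⟨ℓ, j⟩ =
              ∑ j' : (ℓ' : Fin L) × Fin (n ℓ'), W ⟨ℓ, j⟩ j' * (m s j' - mbar j') := by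
            simp [Matrix.mulVec, dotProduct, mul_sub, Finset.sum_sub_distrib]
          rw [h1]
          calc |∑ j' : (ℓ' : Fin L) × Fin (n ℓ'), W ⟨ℓ, j⟩ j' * (m s j' - mbar j')|
              ≤ ∑ j' : (ℓ' : Fin L) × Fin (n ℓ'), |W ⟨ℓ, j⟩ j' * (m s j' - mbar j')| :=
                Finset.abs_sum_le_sum_abs _ _
            _ ≤ ∑ j' : (ℓ' : Fin L) × Fin (n ℓ'),
                  |W ⟨ℓ, j⟩ j'| * (pk.eval s * Real.exp (-s)) := by
                refine Finset.sum_le_sum fun j' _ => ?_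
                rw [abs_mul]
                by_cases hcase : (j'.1 : ℕ) = k
                · obtain ⟨l', jj⟩ := j'
                  have hl : l' = (⟨k, hk'⟩ : Fin L) := Fin.ext hcase
                  subst hl
                  exact mul_le_mul_of_nonneg_left (hpk3 s hs jj) (abs_nonneg _)
                · have hz : W ⟨ℓ, j⟩ j' = 0 := by
                    refine hW _ _ ?_
                    show ((ℓ : Fin L) : ℕ) ≠ (j'.1 : ℕ) + 1
                    simp only [hℓ]
                    omega
                  rw [hz]
                  simp only [abs_zero, zero_mul]
                  positivity
            _ = (∑ j' : (ℓ' : Fin L) × Fin (n ℓ'), |W ⟨ℓ, j⟩ j'|) *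
                  (pk.eval s * Real.exp (-s)) := (Finset.sum_mul _ _ _).symm
        have hSle : (∑ j' : (ℓ' : Fin L) × Fin (n ℓ'), |W ⟨ℓ, j⟩ j'|) ≤
            ∑ i : Fin (n ℓ), ∑ j' : (ℓ' : Fin L) × Fin (n ℓ'), |W ⟨ℓ, i⟩ j'| :=
          Finset.single_le_sum
            (f := fun i : Fin (n ℓ) => ∑ j' : (ℓ' : Fin L) × Fin (n ℓ'), |W ⟨ℓ, i⟩ j'|)
            (fun i _ => Finset.sum_nonneg fun j' _ => abs_nonneg _) (Finset.mem_univ j)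
        calc |d ⟨ℓ, j⟩ s|
            ≤ (K ℓ : ℝ) * ((∑ j' : (ℓ' : Fin L) × Fin (n ℓ'), |W ⟨ℓ, j⟩ j'|) *
                (pk.eval s * Real.exp (-s))) :=
              hlip.trans (mul_le_mul_of_nonneg_left hsum (K ℓ).coe_nonneg)
          _ ≤ c * (pk.eval s * Real.exp (-s)) := by
              rw [hc, mul_assoc]
              exact mul_le_mul_of_nonneg_left
                (mul_le_mul_of_nonneg_right hSle hpk0)
                (by positivity)
          _ = (Polynomial.C c * pk).eval s * Real.exp (-s) := by
              simp [mul_assoc]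
      have hq0 : ∀ s, 0 ≤ s → 0 ≤ (Polynomial.C c * pk).eval s := by
        intro s hs
        simp only [Polynomial.eval_mul, Polynomial.eval_C]
        exact mul_nonneg hc0 (hpk2 s hs)
      obtain ⟨p, hp1, hp2, hp3⟩ := block ℓ (Polynomial.C c * pk) hq0 hdriv
      refine ⟨p, ?_, hp2, hp3⟩
      refine hp1.trans ((antider_natDegree _).trans ?_)
      have hdeg := Polynomial.natDegree_C_mul_le c pk
      omega
  refine ⟨?_, ?_⟩
  · intro ℓ
    obtain ⟨p, hp1, hp2, hp3⟩ := key ℓ.1 ℓ.2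
    refine ⟨p, hp1, fun t ht => ?_⟩
    rw [pi_norm_le_iff_of_nonneg (mul_nonneg (hp2 t ht) (Real.exp_pos _).le)]
    intro j
    rw [Real.norm_eq_abs]
    exact hp3 t ht j
  · rw [tendsto_pi_nhds]
    rintro ⟨ℓ, j⟩
    obtain ⟨p, hp1, hp2, hp3⟩ := key ℓ.1 ℓ.2
    have hb : Tendsto (fun t => p.eval t * Real.exp (-t)) atTop (nhds 0) := by
      have h := p.tendsto_div_exp_atTop
      simpa [Real.exp_neg, div_eq_mul_inv] using h
    have h0 : Tendsto (fun t => m t ⟨ℓ, j⟩ - mbar ⟨ℓ, j⟩) atTop (nhds 0) := by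
      refine squeeze_zero_norm' ?_ hb
      filter_upwards [eventually_ge_atTop (0 : ℝ)] with t ht
      rw [Real.norm_eq_abs]
      exact hp3 t ht j
    have h1 := h0.add_const (mbar ⟨ℓ, j⟩)
    simpa using h1
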